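/- Suppose g_j, g_k : ℝ × ℝ → ℝ are continuous and there exists δ ∈ ℝ such that for all s, s', a, b, x ∈ ℝ: g_j(s', a) − g_j(s, a) + g_k(s', b) − g_k(s, b) = g_j(s', a − δx) − g_j(s, a − δx) + g_k(s', b + x) − g_k(s, b + x). Then there exist functions f_k, γ_k, v_k : ℝ → ℝ such that g_k(s, b) = f_k(s) + γ_k(b) + v_k(s)·b for all s, b ∈ ℝ. -/
import Mathlib


/-- A constant rate of substitution forces the additively separable term to be
affine in the opponent's action. -/
theorem stmt_9 (gj gk : ℝ → ℝ → ℝ)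
    (hj : Continuous fun p : ℝ × ℝ => gj p.1 p.2)
    (hk : Continuous fun p : ℝ × ℝ => gk p.1 p.2)
    (δ : ℝ)
    (hcrs : ∀ s s' a b x : ℝ,
      gj s' a - gj s a + gk s' b - gk s b
        = gj s' (a - δ * x) - gj s (a - δ * x) + gk s' (b + x) - gk s (b + x)) :
    ∃ f γ v : ℝ → ℝ, ∀ s b : ℝ, gk s b = f s + γ b + v s * b := by
  -- h s x := gk s x - gk 0 x - (gk s 0 - gk 0 0) is additive and continuous in x
  set h : ℝ → ℝ → ℝ := fun s x => gk s x - gk 0 x - (gk s 0 - gk 0 0) with hh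
  have hadd : ∀ s b x : ℝ, h s (b + x) = h s b + h s x := by
    intro s b x
    have h1 := hcrs 0 s 0 b x
    have h2 := hcrs 0 s 0 0 x
    simp only [hh]
    rw [zero_add] at h2
    linear_combination h2 - h1
  have hcont : ∀ s : ℝ, Continuous (h s) := by
    intro s
    have c1 : Continuous (fun x : ℝ => gk s x) :=
      hk.comp (continuous_const.prodMk continuous_id)
    have c2 : Continuous (fun x : ℝ => gk 0 x) :=
      hk.comp (continuous_const.prodMk continuous_id)
    exact (c1.sub c2).sub continuous_const
  refine ⟨fun s => gk s 0 - gk 0 0, fun b => gk 0 b, fun s => h s 1, fun s b => ?_⟩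
  have := hadd s
  set φ : ℝ →+ ℝ :=
    { toFun := h s
      map_zero' := by simp [hh]
      map_add' := hadd s } with hφ
  have hlin := (φ.toRealLinearMap (hcont s)).map_smul b 1
  have hφc : ⇑(φ.toRealLinearMap (hcont s)) = h s := AddMonoidHom.coe_toRealLinearMap _ _
  rw [hφc] at hlin
  simp only [smul_eq_mul, mul_one] at hlin
  have hb : h s b = gk s b - gk 0 b - (gk s 0 - gk 0 0) := rfl
  show gk s b = (gk s 0 - gk 0 0) + gk 0 b + h s 1 * b
  linarith [hlin, hb]
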